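/- Let E be a row-finite directed graph with set of sinks W and V = E⁰ \ W, and edge-count matrices B : V × V → ℤ, C : V × W → ℤ. Define T(E) to be the set of graph traces of norm 1: functions g : E⁰ → ℝ≥0 with g(v) = Σ_{e ∈ s⁻¹(v)} g(r(e)) for all v ∈ V and Σ_{v ∈ E⁰} g(v) = 1. Define S to be the set of group homomorphisms f : coker((Bᵗ−I, Cᵗ)) → ℝ such that f([x]) ≥ 0 for all x ∈ ℕ^V ⊕ ℕ^W and sup over finite F ⊆ E⁰ of Σ_{v ∈ F} f([δ_v]) equals 1 (equivalently, for any enumeration v₁, v₂, … of E⁰, limₙ Σᵢ₌₁ⁿ f([δ_{vᵢ}]) = 1). Then the map ι : S → T(E), ι(f)(v) = f([δ_v]), is a bijection. -/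

import Mathlib

open Finsupp

section GraphK

/- A row-finite graph with sinks `W` and non-sinks `V`: every edge has source in `V`
and range in `V ⊕ W`; each `v : V` emits finitely many edges. -/
variable {V W E : Type} (s : E → V) (r : E → V ⊕ W) [∀ v : V, Fintype {e : E // s e = v}]

/-- The standard basis vector `δ_u` of `ℤ^V ⊕ ℤ^W`. -/
noncomputable def delta : V ⊕ W → (V →₀ ℤ) × (W →₀ ℤ) :=
  Sum.elim (fun v => (Finsupp.single v 1, 0)) (fun w => ((0 : V →₀ ℤ), Finsupp.single w 1))

/-- The map `(Bᵗ - I, Cᵗ) : ℤ^V → ℤ^V ⊕ ℤ^W`. -/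
noncomputable def graphK : (V →₀ ℤ) →+ (V →₀ ℤ) × (W →₀ ℤ) :=
  Finsupp.liftAddHom (fun v => zmultiplesHom _
    ((∑ e : {e : E // s e = v}, delta (r e)) - delta (Sum.inl v)))

/-- `g` is a graph trace of norm 1: nonnegative, satisfying the trace identity at every
non-sink, with total sum 1 (`HasSum` expresses that for any enumeration the partial sums
converge to 1). -/
def IsGraphTraceOne (g : V ⊕ W → ℝ) : Prop :=
  (∀ u, 0 ≤ g u) ∧
  (∀ v : V, g (Sum.inl v) = ∑ e : {e : E // s e = v}, g (r e)) ∧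
  HasSum g 1

/-- `f` is a state on the cokernel `G = coker (Bᵗ - I, Cᵗ)`: nonnegative on the classes
of `ℕ^V ⊕ ℕ^W`, and the values `f([δ_u])`, `u ∈ E⁰`, sum to 1. -/
def IsStateOn (f : (((V →₀ ℤ) × (W →₀ ℤ)) ⧸ (graphK s r).range) →+ ℝ) : Prop :=
  (∀ x : (V →₀ ℤ) × (W →₀ ℤ), (∀ v, 0 ≤ x.1 v) → (∀ w, 0 ≤ x.2 w) →
    0 ≤ f (QuotientAddGroup.mk x)) ∧
  HasSum (fun u : V ⊕ W => f (QuotientAddGroup.mk (delta u))) 1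

end GraphK

section Aux

variable {V W E : Type} (s : E → V) (r : E → V ⊕ W) [∀ v : V, Fintype {e : E // s e = v}]

lemma graphK_single (v : V) :
    graphK s r (Finsupp.single v 1) =
      (∑ e : {e : E // s e = v}, delta (r e)) - delta (Sum.inl v) := by
  simp [graphK, Finsupp.liftAddHom_apply_single]

noncomputable def traceF (g : V ⊕ W → ℝ) : (V →₀ ℤ) × (W →₀ ℤ) →+ ℝ :=
  (Finsupp.liftAddHom (fun v => zmultiplesHom ℝ (g (Sum.inl v)))).coprod
    (Finsupp.liftAddHom (fun w => zmultiplesHom ℝ (g (Sum.inr w))))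

lemma traceF_delta (g : V ⊕ W → ℝ) (u : V ⊕ W) : traceF g (delta u) = g u := by
  cases u <;> simp [traceF, delta]

end Aux

/-- for a row-finite graph, the map `ι`, sending a state `f` on the
cokernel `G = coker (Bᵗ - I, Cᵗ)` to the function `u ↦ f([δ_u])`, is a bijection from
states on `G` to graph traces of norm 1: `ι(f)` is always a graph trace of norm 1, and
every graph trace of norm 1 arises as `ι(f)` for a unique state `f`. -/
theorem stmt10 (V W E : Type) [Countable V] [Countable W] [Countable E]
    (s : E → V) (r : E → V ⊕ W) [∀ v : V, Fintype {e : E // s e = v}] :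
    (∀ f, IsStateOn s r f →
      IsGraphTraceOne s r (fun u : V ⊕ W => f (QuotientAddGroup.mk (delta u)))) ∧
    (∀ g : V ⊕ W → ℝ, IsGraphTraceOne s r g →
      ∃! f, IsStateOn s r f ∧ ∀ u : V ⊕ W, f (QuotientAddGroup.mk (delta u)) = g u) := by
  constructor
  · rintro f ⟨hpos, hsum⟩
    refine ⟨fun u => ?_, fun v => ?_, hsum⟩
    · cases u with
      | inl v =>
        refine hpos _ (fun v' => ?_) (fun w => by simp [delta])
        classical
        simp only [delta, Sum.elim_inl, Finsupp.single_apply]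
        split <;> norm_num
      | inr w =>
        refine hpos _ (fun v' => by simp [delta]) (fun w' => ?_)
        classical
        simp only [delta, Sum.elim_inr, Finsupp.single_apply]
        split <;> norm_num
    · have hmem : graphK s r (Finsupp.single v 1) ∈ (graphK s r).range := ⟨_, rfl⟩
      have h0 : (QuotientAddGroup.mk (graphK s r (Finsupp.single v 1)) :
          ((V →₀ ℤ) × (W →₀ ℤ)) ⧸ (graphK s r).range) = 0 :=
        (QuotientAddGroup.eq_zero_iff _).mpr hmem
      rw [graphK_single] at h0
      have := congrArg f h0
      rw [map_zero] at this
      have h2 : f (QuotientAddGroup.mk ((∑ e : {e : E // s e = v}, delta (r e)))) =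
          f (QuotientAddGroup.mk (delta (Sum.inl v))) := by
        have : QuotientAddGroup.mk ((∑ e : {e : E // s e = v}, delta (r e)) - delta (Sum.inl v)) =
            (QuotientAddGroup.mk (∑ e : {e : E // s e = v}, delta (r e)) : ((V →₀ ℤ) × (W →₀ ℤ)) ⧸ (graphK s r).range) - QuotientAddGroup.mk (delta (Sum.inl v)) := rfl
        rw [this] at h0
        linarith [congrArg f (sub_eq_zero.mp h0)]
      dsimp only
      rw [← h2]
      rw [show (QuotientAddGroup.mk (∑ e : {e : E // s e = v}, delta (r e)) :
          ((V →₀ ℤ) × (W →₀ ℤ)) ⧸ (graphK s r).range) =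
          ∑ e : {e : E // s e = v}, QuotientAddGroup.mk (delta (r e)) by
        simp [QuotientAddGroup.mk_sum]]
      rw [map_sum]
  · rintro g ⟨hg0, hgtr, hgsum⟩
    have hker : ∀ x ∈ (graphK s r).range, traceF g x = 0 := by
      rintro _ ⟨y, rfl⟩
      induction y using Finsupp.induction₂ with
      | zero => simp
      | add_single v n x _ _ ih =>
        rw [map_add, map_add, ih]
        simp only [zero_add, add_zero]
        have : (Finsupp.single v n : V →₀ ℤ) = n • Finsupp.single v 1 := by
          simp [Finsupp.smul_single]
        rw [this, map_zsmul, map_zsmul, graphK_single, map_sub, traceF_delta, map_sum]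
        simp only [traceF_delta]
        rw [← hgtr, sub_self, smul_zero]
    set f : (((V →₀ ℤ) × (W →₀ ℤ)) ⧸ (graphK s r).range) →+ ℝ :=
      QuotientAddGroup.lift _ (traceF g) hker with hf
    have hfdelta : ∀ u, f (QuotientAddGroup.mk (delta u)) = g u := fun u => traceF_delta g u
    refine ⟨f, ⟨⟨fun x hx1 hx2 => ?_, by simpa [hfdelta] using hgsum⟩, hfdelta⟩, ?_⟩
    · show 0 ≤ traceF g x
      have h1 : 0 ≤ Finsupp.liftAddHom (fun v => zmultiplesHom ℝ (g (Sum.inl v))) x.1 := by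
        rw [Finsupp.liftAddHom_apply]
        refine Finset.sum_nonneg fun v _ => ?_
        exact zsmul_nonneg (hg0 _) (hx1 v)
      have h2 : 0 ≤ Finsupp.liftAddHom (fun w => zmultiplesHom ℝ (g (Sum.inr w))) x.2 := by
        rw [Finsupp.liftAddHom_apply]
        refine Finset.sum_nonneg fun w _ => ?_
        exact zsmul_nonneg (hg0 _) (hx2 w)
      simpa [traceF] using add_nonneg h1 h2
    · rintro f' ⟨-, hf'⟩
      have hd : ∀ u, f' (QuotientAddGroup.mk (delta u)) = f (QuotientAddGroup.mk (delta u)) :=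
        fun u => (hf' u).trans (hfdelta u).symm
      have hV : f'.comp ((QuotientAddGroup.mk' (graphK s r).range).comp
            (AddMonoidHom.inl (V →₀ ℤ) (W →₀ ℤ))) =
          f.comp ((QuotientAddGroup.mk' (graphK s r).range).comp
            (AddMonoidHom.inl (V →₀ ℤ) (W →₀ ℤ))) := by
        refine Finsupp.addHom_ext' fun v => AddMonoidHom.ext_int ?_
        simpa [delta, AddMonoidHom.comp_apply] using hd (Sum.inl v)
      have hW : f'.comp ((QuotientAddGroup.mk' (graphK s r).range).comp
            (AddMonoidHom.inr (V →₀ ℤ) (W →₀ ℤ))) =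
          f.comp ((QuotientAddGroup.mk' (graphK s r).range).comp
            (AddMonoidHom.inr (V →₀ ℤ) (W →₀ ℤ))) := by
        refine Finsupp.addHom_ext' fun w => AddMonoidHom.ext_int ?_
        simpa [delta, AddMonoidHom.comp_apply] using hd (Sum.inr w)
      refine AddMonoidHom.ext fun q => ?_
      refine QuotientAddGroup.induction_on q fun x => ?_
      have hx : (QuotientAddGroup.mk x : ((V →₀ ℤ) × (W →₀ ℤ)) ⧸ (graphK s r).range) =
          QuotientAddGroup.mk ((x.1, 0) : (V →₀ ℤ) × (W →₀ ℤ)) +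
          QuotientAddGroup.mk ((0, x.2) : (V →₀ ℤ) × (W →₀ ℤ)) := by
        rw [← QuotientAddGroup.mk_add]
        congr 1
        ext <;> simp
      have h1 := DFunLike.congr_fun hV x.1
      have h2 := DFunLike.congr_fun hW x.2
      simp only [AddMonoidHom.comp_apply, AddMonoidHom.inl_apply, AddMonoidHom.inr_apply,
        QuotientAddGroup.mk'_apply] at h1 h2
      rw [hx, map_add, map_add, h1, h2]
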